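/- The space of pseudo-curves with the Hausdorff metric is not complete. Concretely, parametrizing S¹ = ℝ/ℤ by [0,1), for n ≥ 2 let ξ_n : S¹ → I be the continuous map with ξ_n(θ) = 2nθ for θ ∈ [0, 1/(2n)], ξ_n(θ) = 2(1 − nθ) for θ ∈ [1/(2n), 1/n], and ξ_n(θ) = 0 for θ ∈ [1/n, 1). Then the graphs Γ_n of ξ_n satisfy H(Γ_n, Γ_m) ≤ 1/min(n,m) for all n, m ≥ 2 (so they form a Cauchy sequence in the Hausdorff metric), Γ_n converges in the Hausdorff metric to L = (S¹ × {0}) ∪ ({0} × [0,1]), and L is not a pseudo-curve: there is no residual set G ⊆ S¹ and continuous map φ : G → I with L equal to the closure of the graph of φ. -/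

import Mathlib

open Set Metric Filter

/-- The tent map with peak at `1/(2n)`. -/
noncomputable def tentAux13 (n : ℝ) (x : ℝ) : ℝ :=
  if x ≤ 1 / (2 * n) then 2 * n * x
  else if x ≤ 1 / n then 2 * (1 - n * x) else 0

lemma tentAux13_nonneg {n x : ℝ} (hn : 2 ≤ n) (hx : 0 ≤ x) : 0 ≤ tentAux13 n x := by
  have hn0 : (0:ℝ) < n := by linarith
  unfold tentAux13
  split_ifs with h1 h2
  · positivity
  · have := (le_div_iff₀ hn0).mp h2
    nlinarith
  · exact le_refl 0

lemma tentAux13_le_one {n x : ℝ} (hn : 2 ≤ n) (hx : 0 ≤ x) : tentAux13 n x ≤ 1 := by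
  have hn0 : (0:ℝ) < n := by linarith
  have h2n : (0:ℝ) < 2 * n := by linarith
  unfold tentAux13
  split_ifs with h1 h2
  · have := (le_div_iff₀ h2n).mp h1
    nlinarith
  · have := (div_lt_iff₀ h2n).mp (lt_of_not_ge h1)
    nlinarith
  · norm_num

lemma tentAux13_eq_zero {n x : ℝ} (hn : 2 ≤ n) (hx : 1 / n ≤ x) : tentAux13 n x = 0 := by
  have hn0 : (0:ℝ) < n := by linarith
  have hlt : 1 / (2 * n) < 1 / n := by
    apply div_lt_div_of_pos_left one_pos hn0; linarith
  unfold tentAux13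
  split_ifs with h1 h2
  · linarith
  · have hxe : x = 1 / n := le_antisymm h2 hx
    rw [hxe]
    field_simp
    norm_num
  · rfl

lemma tentAux13_peak {n t : ℝ} (hn : 2 ≤ n) (h0 : 0 ≤ t) (h1 : t ≤ 1) :
    tentAux13 n (t / (2 * n)) = t := by
  have hn0 : (0:ℝ) < n := by linarith
  have h2n : (0:ℝ) < 2 * n := by linarith
  have hle : t / (2 * n) ≤ 1 / (2 * n) := by gcongr
  unfold tentAux13
  rw [if_pos hle]
  field_simp

lemma pc13_dist_coe_le (x y : ℝ) :
    dist ((x : ℝ) : UnitAddCircle) ((y : ℝ) : UnitAddCircle) ≤ |x - y| := by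
  rw [dist_eq_norm, ← AddCircle.coe_sub]
  simpa using QuotientAddGroup.norm_mk_le_norm (S := AddSubgroup.zmultiples (1:ℝ)) (m := x - y)

lemma pc13_rep (θ : UnitAddCircle) : ∃ x : ℝ, 0 ≤ x ∧ x < 1 ∧ ((x : ℝ) : UnitAddCircle) = θ := by
  obtain ⟨b, hb, rfl⟩ := AddCircle.eq_coe_Ico θ
  exact ⟨b, hb.1, by simpa using hb.2, rfl⟩

lemma pc13_graph_dist {x y s t r : ℝ} (h1 : |x - y| ≤ r) (h2 : |s - t| ≤ r) :
    dist ((((x : ℝ) : UnitAddCircle), s) : UnitAddCircle × ℝ)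
      ((((y : ℝ) : UnitAddCircle), t) : UnitAddCircle × ℝ) ≤ r := by
  rw [Prod.dist_eq]
  refine max_le ((pc13_dist_coe_le x y).trans h1) ?_
  rwa [Real.dist_eq]

theorem statement13 (a b : ℝ) (ha : a ≤ 0) (hb : 1 ≤ b)
    (ξ : ℕ → UnitAddCircle → ℝ)
    (hξ : ∀ n : ℕ, 2 ≤ n → ∀ x : ℝ, 0 ≤ x → x < 1 →
      ξ n ((x : ℝ) : UnitAddCircle) =
        if x ≤ 1 / (2 * n) then 2 * n * x
        else if x ≤ 1 / n then 2 * (1 - n * x) else 0) :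
    (∀ n m : ℕ, 2 ≤ n → 2 ≤ m →
      hausdorffDist (Set.range fun θ => (θ, ξ n θ)) (Set.range fun θ => (θ, ξ m θ))
        ≤ 1 / ((min n m : ℕ) : ℝ)) ∧
    Tendsto (fun n => hausdorffDist (Set.range fun θ => (θ, ξ n θ))
        (((univ : Set UnitAddCircle) ×ˢ ({0} : Set ℝ)) ∪
          (({((0:ℝ) : UnitAddCircle)} : Set UnitAddCircle) ×ˢ Icc (0:ℝ) 1)))
      atTop (nhds 0) ∧
    ¬ ∃ (G : Set UnitAddCircle) (φ : UnitAddCircle → ℝ),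
        G ∈ residual UnitAddCircle ∧ ContinuousOn φ G ∧ (∀ θ ∈ G, φ θ ∈ Icc a b) ∧
        ((univ : Set UnitAddCircle) ×ˢ ({0} : Set ℝ)) ∪
            (({((0:ℝ) : UnitAddCircle)} : Set UnitAddCircle) ×ˢ Icc (0:ℝ) 1)
          = closure ((fun θ => (θ, φ θ)) '' G) := by
  have hξ' : ∀ (n : ℕ), 2 ≤ n → ∀ x : ℝ, 0 ≤ x → x < 1 → ξ n ↑x = tentAux13 (n : ℝ) x := by
    intro n hn x h0 h1
    rw [hξ n hn x h0 h1]; rfl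
  have hb2 : ∀ (n : ℕ), 2 ≤ n → (2:ℝ) ≤ (n:ℝ) := fun n hn => by exact_mod_cast hn
  -- Claim 1: points of Γ_n are within 1/n of Γ_m (when n ≤ m).
  have main1 : ∀ n m : ℕ, 2 ≤ n → 2 ≤ m → n ≤ m → ∀ θ : UnitAddCircle,
      ∃ θ' : UnitAddCircle, dist (θ, ξ n θ) (θ', ξ m θ') ≤ 1 / (n : ℝ) := by
    intro n m hn hm hnm θ
    obtain ⟨x, hx0, hx1, rfl⟩ := pc13_rep θ
    have hnR := hb2 n hn
    have hmR := hb2 m hm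
    have hn0 : (0:ℝ) < n := by linarith
    have hm0 : (0:ℝ) < m := by linarith
    have hnmR : (n:ℝ) ≤ (m:ℝ) := by exact_mod_cast hnm
    have h1n : 1/(m:ℝ) ≤ 1/(n:ℝ) := one_div_le_one_div_of_le hn0 hnmR
    rw [hξ' n hn x hx0 hx1]
    by_cases hc : 1/(n:ℝ) ≤ x
    · refine ⟨((x : ℝ) : UnitAddCircle), ?_⟩
      rw [hξ' m hm x hx0 hx1, tentAux13_eq_zero hnR hc,
        tentAux13_eq_zero hmR (le_trans h1n hc), dist_self]
      positivity
    · push_neg at hc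
      set t := tentAux13 (n:ℝ) x with ht
      have ht0 : 0 ≤ t := tentAux13_nonneg hnR hx0
      have ht1 : t ≤ 1 := tentAux13_le_one hnR hx0
      set y := t / (2 * (m:ℝ)) with hy
      have hy0 : 0 ≤ y := by positivity
      have hyle : y ≤ 1/(2*(m:ℝ)) := by rw [hy]; gcongr
      have hinv : 1/(2*(m:ℝ)) ≤ 1/(m:ℝ) := one_div_le_one_div_of_le hm0 (by linarith)
      have hy1 : y < 1 := lt_of_le_of_lt hyle ((div_lt_one (by linarith)).mpr (by linarith))
      refine ⟨((y : ℝ) : UnitAddCircle), ?_⟩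
      rw [hξ' m hm y hy0 hy1, hy, tentAux13_peak hmR ht0 ht1, ← hy]
      apply pc13_graph_dist
      · rw [abs_le]
        constructor <;> [linarith; linarith]
      · simp only [sub_self, abs_zero]
        positivity
  -- Claim 2: points of Γ_m are within 1/n of Γ_n (when n ≤ m).
  have main2 : ∀ n m : ℕ, 2 ≤ n → 2 ≤ m → n ≤ m → ∀ θ : UnitAddCircle,
      ∃ θ' : UnitAddCircle, dist (θ, ξ m θ) (θ', ξ n θ') ≤ 1 / (n : ℝ) := by
    intro n m hn hm hnm θ
    obtain ⟨x, hx0, hx1, rfl⟩ := pc13_rep θ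
    have hnR := hb2 n hn
    have hmR := hb2 m hm
    have hn0 : (0:ℝ) < n := by linarith
    have hm0 : (0:ℝ) < m := by linarith
    have hnmR : (n:ℝ) ≤ (m:ℝ) := by exact_mod_cast hnm
    have h1n : 1/(m:ℝ) ≤ 1/(n:ℝ) := one_div_le_one_div_of_le hn0 hnmR
    rw [hξ' m hm x hx0 hx1]
    by_cases hc : 1/(m:ℝ) ≤ x
    · rw [tentAux13_eq_zero hmR hc]
      by_cases hc2 : 1/(n:ℝ) ≤ x
      · refine ⟨((x : ℝ) : UnitAddCircle), ?_⟩
        rw [hξ' n hn x hx0 hx1, tentAux13_eq_zero hnR hc2, dist_self]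
        positivity
      · push_neg at hc2
        have h0n : (0:ℝ) ≤ 1/(n:ℝ) := by positivity
        have h1n1 : 1/(n:ℝ) < 1 := (div_lt_one hn0).mpr (by linarith)
        refine ⟨((1/(n:ℝ) : ℝ) : UnitAddCircle), ?_⟩
        rw [hξ' n hn _ h0n h1n1, tentAux13_eq_zero hnR (le_refl _)]
        apply pc13_graph_dist
        · rw [abs_le]
          constructor <;> [linarith; linarith]
        · simp only [sub_self, abs_zero]; positivity
    · push_neg at hc
      set t := tentAux13 (m:ℝ) x with ht
      have ht0 : 0 ≤ t := tentAux13_nonneg hmR hx0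
      have ht1 : t ≤ 1 := tentAux13_le_one hmR hx0
      set y := t / (2 * (n:ℝ)) with hy
      have hy0 : 0 ≤ y := by positivity
      have hyle : y ≤ 1/(2*(n:ℝ)) := by rw [hy]; gcongr
      have hinv : 1/(2*(n:ℝ)) ≤ 1/(n:ℝ) := one_div_le_one_div_of_le hn0 (by linarith)
      have hy1 : y < 1 := lt_of_le_of_lt hyle ((div_lt_one (by linarith)).mpr (by linarith))
      refine ⟨((y : ℝ) : UnitAddCircle), ?_⟩
      rw [hξ' n hn y hy0 hy1, hy, tentAux13_peak hnR ht0 ht1, ← hy]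
      apply pc13_graph_dist
      · rw [abs_le]
        constructor <;> [linarith; linarith]
      · simp only [sub_self, abs_zero]; positivity
  have key : ∀ n m : ℕ, 2 ≤ n → 2 ≤ m → n ≤ m →
      hausdorffDist (Set.range fun θ => (θ, ξ n θ)) (Set.range fun θ => (θ, ξ m θ))
        ≤ 1 / (n : ℝ) := by
    intro n m hn hm hnm
    have hn0 : (0:ℝ) < n := by
      have := hb2 n hn; linarith
    apply hausdorffDist_le_of_mem_dist (by positivity)
    · rintro p ⟨θ, rfl⟩
      obtain ⟨θ', h⟩ := main1 n m hn hm hnm θ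
      exact ⟨_, Set.mem_range_self θ', h⟩
    · rintro p ⟨θ, rfl⟩
      obtain ⟨θ', h⟩ := main2 n m hn hm hnm θ
      exact ⟨_, Set.mem_range_self θ', h⟩
  refine ⟨?_, ?_, ?_⟩
  · -- Cauchy bound
    intro n m hn hm
    rcases le_total n m with h | h
    · rw [min_eq_left h]
      exact key n m hn hm h
    · rw [min_eq_right h, hausdorffDist_comm]
      exact key m n hm hn h
  · -- convergence to L
    have mainL : ∀ n : ℕ, 2 ≤ n →
        hausdorffDist (Set.range fun θ => (θ, ξ n θ))
          (((univ : Set UnitAddCircle) ×ˢ ({0} : Set ℝ)) ∪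
            (({((0:ℝ) : UnitAddCircle)} : Set UnitAddCircle) ×ˢ Icc (0:ℝ) 1)) ≤ 1 / (n : ℝ) := by
      intro n hn
      have hnR := hb2 n hn
      have hn0 : (0:ℝ) < n := by linarith
      apply hausdorffDist_le_of_mem_dist (by positivity)
      · rintro p ⟨θ, rfl⟩
        obtain ⟨x, hx0, hx1, rfl⟩ := pc13_rep θ
        dsimp only
        rw [hξ' n hn x hx0 hx1]
        by_cases hc : 1/(n:ℝ) ≤ x
        · refine ⟨(((x:ℝ) : UnitAddCircle), 0), Or.inl ⟨mem_univ _, rfl⟩, ?_⟩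
          rw [tentAux13_eq_zero hnR hc, dist_self]
          positivity
        · push_neg at hc
          refine ⟨((((0:ℝ)) : UnitAddCircle), tentAux13 (n:ℝ) x),
            Or.inr ⟨rfl, tentAux13_nonneg hnR hx0, tentAux13_le_one hnR hx0⟩, ?_⟩
          apply pc13_graph_dist
          · rw [abs_le]
            constructor <;> [linarith; linarith]
          · simp only [sub_self, abs_zero]; positivity
      · rintro ⟨θ, s⟩ (⟨-, hs⟩ | ⟨hθ, hs0, hs1⟩)
        · rcases hs with rfl
          obtain ⟨x, hx0, hx1, rfl⟩ := pc13_rep θ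
          by_cases hc : 1/(n:ℝ) ≤ x
          · refine ⟨_, Set.mem_range_self (((x:ℝ) : UnitAddCircle)), ?_⟩
            rw [hξ' n hn x hx0 hx1, tentAux13_eq_zero hnR hc, dist_self]
            positivity
          · push_neg at hc
            have h0n : (0:ℝ) ≤ 1/(n:ℝ) := by positivity
            have h1n1 : 1/(n:ℝ) < 1 := (div_lt_one hn0).mpr (by linarith)
            refine ⟨_, Set.mem_range_self (((1/(n:ℝ) : ℝ) : UnitAddCircle)), ?_⟩
            rw [hξ' n hn _ h0n h1n1, tentAux13_eq_zero hnR (le_refl _)]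
            apply pc13_graph_dist
            · rw [abs_le]
              constructor <;> [linarith; linarith]
            · simp only [sub_self, abs_zero]; positivity
        · rcases mem_singleton_iff.mp hθ with rfl
          set y := s / (2 * (n:ℝ)) with hy
          have hy0 : 0 ≤ y := by positivity
          have hyle : y ≤ 1/(2*(n:ℝ)) := by rw [hy]; gcongr
          have hinv : 1/(2*(n:ℝ)) ≤ 1/(n:ℝ) := one_div_le_one_div_of_le hn0 (by linarith)
          have hy1 : y < 1 := lt_of_le_of_lt hyle ((div_lt_one (by linarith)).mpr (by linarith))
          refine ⟨_, Set.mem_range_self (((y:ℝ) : UnitAddCircle)), ?_⟩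
          rw [hξ' n hn y hy0 hy1, hy, tentAux13_peak hnR hs0 hs1, ← hy]
          apply pc13_graph_dist
          · rw [abs_le]
            constructor <;> [linarith; linarith]
          · simp only [sub_self, abs_zero]; positivity
    apply squeeze_zero'
    · filter_upwards with n using hausdorffDist_nonneg
    · filter_upwards [eventually_ge_atTop 2] with n hn using mainL n hn
    · exact tendsto_one_div_atTop_nhds_zero_nat
  · -- L is not a pseudo-curve
    rintro ⟨G, φ, hG, hφc, hφmem, hLeq⟩
    set L : Set (UnitAddCircle × ℝ) :=
      ((univ : Set UnitAddCircle) ×ˢ ({0} : Set ℝ)) ∪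
        (({((0:ℝ) : UnitAddCircle)} : Set UnitAddCircle) ×ˢ Icc (0:ℝ) 1) with hLdef
    have h1 : ((((0:ℝ) : UnitAddCircle), (1:ℝ)) : UnitAddCircle × ℝ) ∈
        closure ((fun θ => (θ, φ θ)) '' G) := by
      rw [← hLeq]
      exact Or.inr ⟨rfl, by norm_num, by norm_num⟩
    have h2 : ((((0:ℝ) : UnitAddCircle), (1/2:ℝ)) : UnitAddCircle × ℝ) ∈
        closure ((fun θ => (θ, φ θ)) '' G) := by
      rw [← hLeq]
      exact Or.inr ⟨rfl, by norm_num, by norm_num⟩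
    set C : Set (UnitAddCircle × ℝ) :=
      ((univ : Set UnitAddCircle) ×ˢ ({0} : Set ℝ)) ∪
        {((((0:ℝ) : UnitAddCircle), φ ((0:ℝ) : UnitAddCircle)) : UnitAddCircle × ℝ)} with hCdef
    have hCclosed : IsClosed C :=
      (isClosed_univ.prod isClosed_singleton).union isClosed_singleton
    have himg : (fun θ => (θ, φ θ)) '' G ⊆ C := by
      rintro _ ⟨θ, hθG, rfl⟩
      dsimp only
      have hmem : ((θ, φ θ) : UnitAddCircle × ℝ) ∈
          ((univ : Set UnitAddCircle) ×ˢ ({0} : Set ℝ)) ∪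
            (({((0:ℝ) : UnitAddCircle)} : Set UnitAddCircle) ×ˢ Icc (0:ℝ) 1) := by
        rw [← hLdef, hLeq]
        exact subset_closure ⟨θ, hθG, rfl⟩
      rcases hmem with h | h
      · exact Or.inl h
      · have hθ0 : θ = ((0:ℝ) : UnitAddCircle) := h.1
        right
        rw [mem_singleton_iff, hθ0]
    have hcl : closure ((fun θ => (θ, φ θ)) '' G) ⊆ C := closure_minimal himg hCclosed
    have c1 := hcl h1
    have c2 := hcl h2
    have e1 : φ ((0:ℝ) : UnitAddCircle) = 1 := by
      rcases c1 with h | h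
      · exact absurd (mem_singleton_iff.mp h.2) one_ne_zero
      · rcases mem_singleton_iff.mp h with h'
        exact ((Prod.ext_iff.mp h').2).symm
    have e2 : φ ((0:ℝ) : UnitAddCircle) = 1/2 := by
      rcases c2 with h | h
      · exact absurd (mem_singleton_iff.mp h.2) (by norm_num)
      · rcases mem_singleton_iff.mp h with h'
        exact ((Prod.ext_iff.mp h').2).symm
    rw [e1] at e2
    norm_num at e2
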